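/- If k₁ + k₂ + k₃ = 0, then the perpendicular bracket represents the anti-cyclic pairing of Lie brackets: B([ξ₁,ξ₂]^⊥, ξ₃) = −B([ξ₁,ξ₂], ξ₃) + B([ξ₃,ξ₁], ξ₂) + B([ξ₂,ξ₃], ξ₁). -/

import Mathlib

namespace Stmt14

variable {V : Type*} [AddCommGroup V] [Module ℝ V]

/-- The momentum-space Lie bracket of modes. -/
def lieMode (B : LinearMap.BilinForm ℝ V) (p q : V × V) : V × V :=
  (B p.1 q.2 • q.1 - B q.1 p.2 • p.1, p.2 + q.2)

/-- The perpendicular bracket of modes: polarization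
`[ξ₁,ξ₂]^⊥ = (ξ₁·ξ₂)(k₁−k₂) + (ξ₁·k₁)ξ₂ − (ξ₂·k₂)ξ₁`, momentum `k₁+k₂`. -/
def perpMode (B : LinearMap.BilinForm ℝ V) (p q : V × V) : V × V :=
  (B p.1 q.1 • (p.2 - q.2) + B p.1 p.2 • q.1 - B q.1 q.2 • p.1, p.2 + q.2)

/-- If `k₁ + k₂ + k₃ = 0`, then
`B([ξ₁,ξ₂]^⊥, ξ₃) = −B([ξ₁,ξ₂],ξ₃) + B([ξ₃,ξ₁],ξ₂) + B([ξ₂,ξ₃],ξ₁)`. -/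
theorem perp_anticyclic (B : LinearMap.BilinForm ℝ V) (hB : B.IsSymm)
    (ξ₁ k₁ ξ₂ k₂ ξ₃ k₃ : V) (h : k₁ + k₂ + k₃ = 0) :
    B (perpMode B (ξ₁, k₁) (ξ₂, k₂)).1 ξ₃
      = -B (lieMode B (ξ₁, k₁) (ξ₂, k₂)).1 ξ₃
        + B (lieMode B (ξ₃, k₃) (ξ₁, k₁)).1 ξ₂
        + B (lieMode B (ξ₂, k₂) (ξ₃, k₃)).1 ξ₁ := by
  have hk : k₃ = -k₁ - k₂ := by
    have := h; abel_nf at this ⊢; linear_combination (norm := abel) this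
  subst hk
  simp only [perpMode, lieMode, map_add, map_sub, map_smul, map_neg,
    LinearMap.add_apply, LinearMap.sub_apply, LinearMap.smul_apply,
    LinearMap.neg_apply, smul_eq_mul]
  have s12 := hB.eq ξ₁ ξ₂
  have s13 := hB.eq ξ₁ ξ₃
  have s23 := hB.eq ξ₂ ξ₃
  have h1 := hB.eq ξ₁ k₁
  have h2 := hB.eq ξ₂ k₂
  have h3 := hB.eq ξ₃ k₁
  have h4 := hB.eq ξ₃ k₂
  have h5 := hB.eq ξ₁ k₂
  have h6 := hB.eq ξ₂ k₁
  rw [← s12, ← s13, ← s23, h3, h4]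
  ring

end Stmt14
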